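/- As j → ∞ (j a positive integer, or more generally j → ∞ along the reals), ∫₀^{(π²/4) j^{2/3}} exp( −j^{1/3} ( φ + π/√φ ) ) dφ is asymptotically equivalent to √( (8/(3 j^{1/3})) · (π/2)^{5/3} ) · exp( −3 (π/2)^{2/3} j^{1/3} ), i.e. the ratio of the two quantities tends to 1. -/

import Mathlib

open MeasureTheory Filter Topology

/-- Pollaczek polynomials with parameters a = 1, b = 0. -/
noncomputable def pol : ℕ → ℝ → ℝ
  | 0, _ => 1
  | 1, x => 2 * x
  | (n+2), x => (2 * ((n:ℝ) + 2) * x * pol (n+1) x - ((n:ℝ) + 1) * pol n x) / ((n:ℝ) + 2)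

/-- Rescaled polynomials `Q_n(x) = ρ^{-n/2} P_n((1+ρ)x/(2√ρ))`. -/
noncomputable def Q (ρ : ℝ) (n : ℕ) (x : ℝ) : ℝ :=
  pol n ((1 + ρ) * x / (2 * Real.sqrt ρ)) / (Real.sqrt ρ) ^ n

/-- `x_ρ(θ) = (2√ρ/(1+ρ)) cos θ`. -/
noncomputable def X (ρ θ : ℝ) : ℝ := (2 * Real.sqrt ρ / (1 + ρ)) * Real.cos θ

/-- Density of the spectral measure in the variable θ. -/
noncomputable def W (θ : ℝ) : ℝ :=
  (Real.sin θ / Real.cosh (Real.pi * (Real.cos θ / Real.sin θ) / 2)) *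
    Real.exp ((θ - Real.pi / 2) * (Real.cos θ / Real.sin θ))

/-- `G_ρ(θ) = 𝒫(θ, √ρ) = ∑ ρ^m Q_m(x_ρ(θ))`. -/
noncomputable def G (ρ θ : ℝ) : ℝ :=
  (1 - 2 * Real.sqrt ρ * Real.cos θ + ρ) ^ (-(1:ℝ)/2) *
    Real.exp ((Real.cos θ / Real.sin θ) *
      Real.arctan (Real.sqrt ρ * Real.sin θ / (1 - Real.sqrt ρ * Real.cos θ)))

/-- Powers of the sub-stochastic tridiagonal matrix `A` of the absorbed M/M/1-PS chain. -/
noncomputable def ker (ρ : ℝ) : ℕ → ℕ → ℕ → ℝ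
  | 0, n, m => if n = m then 1 else 0
  | (k+1), 0, m => (ρ / (1 + ρ)) * ker ρ k 1 m
  | (k+1), (n+1), m => (ρ / (1 + ρ)) * ker ρ k (n+2) m +
      (((n:ℝ) + 1) / (((n:ℝ) + 2) * (1 + ρ))) * ker ρ k n m


lemma aux_key {a u : ℝ} (ha : 0 < a) (hu : -a^2 < u) :
    (a^2 + u) + 2*a^3 / Real.sqrt (a^2 + u) - 3*a^2
      = (Real.sqrt (a^2+u) - a)^2 * (Real.sqrt (a^2+u) + 2*a) / Real.sqrt (a^2+u) := by
  have hpos : 0 < a^2 + u := by nlinarith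
  set x := Real.sqrt (a^2+u) with hx
  have hxpos : 0 < x := Real.sqrt_pos.mpr hpos
  have hx2 : x^2 = a^2 + u := Real.sq_sqrt hpos.le
  field_simp
  nlinarith [hx2, hxpos]

lemma aux_key2 {a t s : ℝ} (ha : 0 < a) (ht : 0 < t) (hs : -a^2 < s / Real.sqrt t) :
    t * ((a^2 + s/Real.sqrt t) + 2*a^3 / Real.sqrt (a^2 + s/Real.sqrt t) - 3*a^2)
      = s^2 * ((Real.sqrt (a^2 + s/Real.sqrt t) + 2*a) /
          ((Real.sqrt (a^2 + s/Real.sqrt t) + a)^2 * Real.sqrt (a^2 + s/Real.sqrt t))) := by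
  obtain ⟨r, hrpos, rfl⟩ : ∃ r, 0 < r ∧ r^2 = t := ⟨Real.sqrt t, Real.sqrt_pos.mpr ht, Real.sq_sqrt ht.le⟩
  rw [Real.sqrt_sq hrpos.le] at hs ⊢
  set u := s / r with hu
  have hpos : 0 < a^2 + u := by nlinarith
  rw [aux_key ha hs]
  set x := Real.sqrt (a^2+u) with hx
  have hxpos : 0 < x := Real.sqrt_pos.mpr hpos
  have hx2 : x^2 = a^2 + u := Real.sq_sqrt hpos.le
  have hxa : x - a = u / (x + a) := by
    rw [eq_div_iff (by positivity)]; linear_combination hx2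
  rw [hxa, hu]
  field_simp

lemma aux_sqrt_atTop : Tendsto Real.sqrt atTop atTop := by
  refine tendsto_atTop_atTop.2 fun b => ⟨b^2, fun x hx => ?_⟩
  calc b ≤ |b| := le_abs_self b
  _ = Real.sqrt (b^2) := (Real.sqrt_sq_eq_abs b).symm
  _ ≤ Real.sqrt x := Real.sqrt_le_sqrt hx

set_option maxHeartbeats 1000000 in
lemma aux_main :
    Filter.Tendsto (fun t : ℝ =>
      (∫ φ in (0:ℝ)..((Real.pi ^ 2 / 4) * t ^ 2),
        Real.exp (-t * (φ + Real.pi / Real.sqrt φ))) /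
      (Real.sqrt ((8 / (3 * t)) * (Real.pi/2) ^ ((5:ℝ)/3)) *
        Real.exp (-3 * (Real.pi/2) ^ ((2:ℝ)/3) * t)))
      Filter.atTop (nhds 1) := by
  have hπ2 : (1:ℝ) < Real.pi/2 := by nlinarith [Real.pi_gt_three]
  have hπ2' : (0:ℝ) < Real.pi/2 := by linarith
  set a : ℝ := (Real.pi/2) ^ ((1:ℝ)/3) with hadef
  have ha1 : 1 < a := Real.one_lt_rpow hπ2 (by norm_num)
  have ha : 0 < a := lt_trans one_pos ha1
  have ha3 : a^3 = Real.pi/2 := by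
    rw [hadef, ← Real.rpow_natCast ((Real.pi/2) ^ ((1:ℝ)/3)) 3, ← Real.rpow_mul hπ2'.le]
    norm_num
  have hπ : Real.pi = 2*a^3 := by rw [ha3]; ring
  have ha2 : (Real.pi/2) ^ ((2:ℝ)/3) = a^2 := by
    rw [hadef, ← Real.rpow_natCast ((Real.pi/2) ^ ((1:ℝ)/3)) 2, ← Real.rpow_mul hπ2'.le]
    norm_num
  have ha5 : (Real.pi/2) ^ ((5:ℝ)/3) = a^5 := by
    rw [hadef, ← Real.rpow_natCast ((Real.pi/2) ^ ((1:ℝ)/3)) 5, ← Real.rpow_mul hπ2'.le]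
    norm_num
  have hπ6 : Real.pi^2/4 = a^6 := by rw [hπ]; ring
  set K : ℝ := Real.sqrt (8*a^5/3) with hKdef
  have hK : 0 < K := Real.sqrt_pos.mpr (by positivity)
  set L : ℝ → ℝ := fun t => -a^2 * Real.sqrt t with hLdef
  set R : ℝ → ℝ := fun t => (a^6*t^2 - a^2) * Real.sqrt t with hRdef
  set f : ℝ → ℝ → ℝ := fun t s =>
    Real.exp (-(t * ((a^2 + s/Real.sqrt t) + Real.pi / Real.sqrt (a^2 + s/Real.sqrt t) - 3*a^2)))
    with hfdef
  set F : ℝ → ℝ := fun t => ∫ s, (Set.Ioc (L t) (R t)).indicator (f t) s with hFdef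
  -- dominated convergence
  have hDCT : Tendsto F atTop (𝓝 (∫ s, Real.exp (-(3/(4*a^2)) * s^2))) := by
    rw [hFdef]
    set D : ℝ → ℝ := fun s => Real.exp (-(1/(9*a^2) * s^2)) +
      (Set.Ioi (3*a^2)).indicator (fun s => Real.exp (-(1/4 * s))) s with hDdef
    have hind_nn : ∀ s : ℝ, 0 ≤ (Set.Ioi (3*a^2)).indicator
        (fun s => Real.exp (-(1/4 * s))) s :=
      fun s => Set.indicator_nonneg (fun x _ => (Real.exp_pos _).le) s
    refine tendsto_integral_filter_of_dominated_convergence D ?_ ?_ ?_ ?_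
    · -- measurability
      refine Eventually.of_forall fun t => ?_
      have hm : Measurable fun s : ℝ => a^2 + s/Real.sqrt t :=
        (measurable_id.div_const _).const_add _
      have hm2 : Measurable (f t) := by
        rw [hfdef]
        exact Real.measurable_exp.comp ((measurable_const.mul
          ((hm.add (measurable_const.div
            (Real.continuous_sqrt.measurable.comp hm))).sub measurable_const)).neg)
      exact (hm2.indicator measurableSet_Ioc).aestronglyMeasurable
    · -- bound
      filter_upwards [eventually_ge_atTop (1:ℝ)] with t ht1
      refine Filter.Eventually.of_forall fun s => ?_
      have ht0 : 0 < t := lt_of_lt_of_le one_pos ht1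
      have hst : 0 < Real.sqrt t := Real.sqrt_pos.mpr ht0
      have hst1 : 1 ≤ Real.sqrt t := by
        rw [show (1:ℝ) = Real.sqrt 1 by simp]
        exact Real.sqrt_le_sqrt ht1
      by_cases hs : s ∈ Set.Ioc (L t) (R t)
      · rw [Set.indicator_of_mem hs]
        simp only [hfdef]
        rw [Real.norm_eq_abs, abs_of_pos (Real.exp_pos _)]
        have hu : -a^2 < s/Real.sqrt t := by
          rw [lt_div_iff₀ hst]
          have := hs.1
          rw [hLdef] at this
          exact this
        have hpos : 0 < a^2 + s/Real.sqrt t := by nlinarith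
        rw [hπ, aux_key2 ha ht0 hu]
        set x := Real.sqrt (a^2 + s/Real.sqrt t) with hxdef
        have hx0 : 0 < x := Real.sqrt_pos.mpr hpos
        have hx2 : x^2 = a^2 + s/Real.sqrt t := Real.sq_sqrt hpos.le
        by_cases hx2a : x ≤ 2*a
        · have hQ : 1/(9*a^2) ≤ (x+2*a)/((x+a)^2*x) := by
            rw [div_le_div_iff₀ (by positivity) (by positivity)]
            have e1 : (x+a)^2 ≤ 9*a^2 := by nlinarith
            have e2 : (x+a)^2*x ≤ 9*a^2*(x+2*a) :=
              mul_le_mul e1 (by linarith) hx0.le (by positivity)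
            linarith
          calc Real.exp (-(s^2 * ((x+2*a)/((x+a)^2*x))))
              ≤ Real.exp (-(1/(9*a^2) * s^2)) := by
                apply Real.exp_le_exp.mpr
                nlinarith [mul_le_mul_of_nonneg_left hQ (sq_nonneg s)]
            _ ≤ D s := le_add_of_nonneg_right (hind_nn s)
        · push_neg at hx2a
          have hu3 : 3*a^2 < s/Real.sqrt t := by nlinarith
          have hspos : 0 < s := by
            have h0 : 0 < s/Real.sqrt t := lt_trans (by positivity) hu3
            have := div_mul_cancel₀ s hst.ne'
            nlinarith [mul_pos h0 hst]
          have hus : s/Real.sqrt t ≤ s := div_le_self hspos.le hst1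
          have hs3 : 3*a^2 < s := lt_of_lt_of_le hu3 hus
          have hxs : x^2 - a^2 ≤ s := by rw [hx2]; linarith
          have hbig : 1/4 * s ≤ s^2 * ((x+2*a)/((x+a)^2*x)) := by
            rw [mul_div_assoc' (s^2), le_div_iff₀ (by positivity)]
            have k1 : s*(x^2-a^2) ≤ s*s :=
              mul_le_mul_of_nonneg_left hxs hspos.le
            have h1 : 0 ≤ (s*s - s*(x^2-a^2)) * (x+2*a) :=
              mul_nonneg (by linarith) (by positivity)
            have p2 : (1/4)*((x+a)^2*x) ≤ (x^2-a^2)*(x+2*a) := by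
              nlinarith [mul_pos (sub_pos.mpr hx2a) (mul_pos hx0 ha),
                mul_pos (sub_pos.mpr hx2a) (mul_pos hx0 hx0),
                mul_pos (sub_pos.mpr hx2a) (mul_pos ha ha), mul_pos hx0 ha]
            have h2 : 0 ≤ s * ((x^2-a^2)*(x+2*a) - (1/4)*((x+a)^2*x)) :=
              mul_nonneg hspos.le (by linarith)
            nlinarith [h1, h2]
          calc Real.exp (-(s^2 * ((x+2*a)/((x+a)^2*x))))
              ≤ Real.exp (-(1/4 * s)) := Real.exp_le_exp.mpr (neg_le_neg hbig)
            _ ≤ D s := by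
                rw [hDdef]
                dsimp only
                rw [Set.indicator_of_mem (Set.mem_Ioi.mpr hs3)]
                exact le_add_of_nonneg_left (Real.exp_pos _).le
      · rw [Set.indicator_of_notMem hs, norm_zero]
        exact add_nonneg (Real.exp_pos _).le (hind_nn s)
    · -- integrability of the bound
      refine Integrable.add ?_ ?_
      · simpa [neg_mul] using integrable_exp_neg_mul_sq
          (show (0:ℝ) < 1/(9*a^2) by positivity)
      · refine IntegrableOn.integrable_indicator ?_ measurableSet_Ioi
        simpa [neg_mul] using exp_neg_integrableOn_Ioi (3*a^2)
          (show (0:ℝ) < 1/4 by norm_num)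
    · -- pointwise limit
      refine Filter.Eventually.of_forall fun s => ?_
      have hLatBot : Tendsto L atTop atBot := by
        have h := Tendsto.const_mul_atTop (show (0:ℝ) < a^2 by positivity) aux_sqrt_atTop
        have h2 : Tendsto (fun t : ℝ => -(a^2 * Real.sqrt t)) atTop atBot :=
          tendsto_neg_atBot_iff.mpr h
        rw [hLdef]
        simpa [neg_mul] using h2
      have hRatTop : Tendsto R atTop atTop := by
        have h1 : Tendsto (fun t : ℝ => a^6*t^2 - a^2) atTop atTop := by
          have h2 := Tendsto.const_mul_atTop (show (0:ℝ) < a^6 by positivity)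
            (tendsto_pow_atTop (two_ne_zero) : Tendsto (fun t : ℝ => t^2) atTop atTop)
          have := tendsto_atTop_add_const_right atTop (-a^2) h2
          simpa [sub_eq_add_neg] using this
        rw [hRdef]
        exact h1.atTop_mul_atTop₀ aux_sqrt_atTop
      have hmem : ∀ᶠ t : ℝ in atTop, s ∈ Set.Ioc (L t) (R t) := by
        filter_upwards [hLatBot.eventually_lt_atBot s, hRatTop.eventually_ge_atTop s]
          with t h1 h2
        exact ⟨h1, h2⟩
      have hx : Tendsto (fun t : ℝ => Real.sqrt (a^2 + s/Real.sqrt t)) atTop (𝓝 a) := by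
        have h1 : Tendsto (fun t : ℝ => s/Real.sqrt t) atTop (𝓝 0) :=
          tendsto_const_nhds.div_atTop aux_sqrt_atTop
        have h2 : Tendsto (fun t : ℝ => Real.sqrt (a^2 + s/Real.sqrt t)) atTop
            (𝓝 (Real.sqrt (a^2 + 0))) :=
          Filter.Tendsto.sqrt
            ((tendsto_const_nhds : Tendsto (fun _ : ℝ => a^2) atTop (𝓝 (a^2))).add h1)
        simpa [Real.sqrt_sq ha.le] using h2
      have hg2 : Tendsto (fun t : ℝ => Real.exp (-(s^2 *
          ((Real.sqrt (a^2+s/Real.sqrt t)+2*a) /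
            ((Real.sqrt (a^2+s/Real.sqrt t)+a)^2 * Real.sqrt (a^2+s/Real.sqrt t))))))
          atTop (𝓝 (Real.exp (-(3/(4*a^2)) * s^2))) := by
        have hden : ((a+a)^2*a) ≠ 0 := by positivity
        have h3 : Tendsto (fun t : ℝ => -(s^2 *
            ((Real.sqrt (a^2+s/Real.sqrt t)+2*a) /
              ((Real.sqrt (a^2+s/Real.sqrt t)+a)^2 * Real.sqrt (a^2+s/Real.sqrt t)))))
            atTop (𝓝 (-(s^2 * ((a+2*a)/((a+a)^2*a))))) :=
          (tendsto_const_nhds.mul ((hx.add tendsto_const_nhds).div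
            (((hx.add tendsto_const_nhds).pow 2).mul hx) hden)).neg
        have h4 := (Real.continuous_exp.tendsto _).comp h3
        have h5 : -(s^2 * ((a+2*a)/((a+a)^2*a))) = -(3/(4*a^2)) * s^2 := by
          field_simp; ring
        rw [h5] at h4
        exact h4
      refine Filter.Tendsto.congr' ?_ hg2
      filter_upwards [hmem, eventually_ge_atTop (1:ℝ)] with t hmemt ht1
      have ht0 : 0 < t := lt_of_lt_of_le one_pos ht1
      have hst : 0 < Real.sqrt t := Real.sqrt_pos.mpr ht0
      have hu : -a^2 < s/Real.sqrt t := by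
        rw [lt_div_iff₀ hst]
        have := hmemt.1
        rw [hLdef] at this
        exact this
      rw [Set.indicator_of_mem hmemt]
      simp only [hfdef]
      rw [hπ, aux_key2 ha ht0 hu]
  have hgauss : (∫ s, Real.exp (-(3/(4*a^2)) * s^2)) = K := by
    have hb : (0:ℝ) < 3/(4*a^2) := by positivity
    have := integral_gaussian (3/(4*a^2))
    rw [this]  -- may need shape match
    rw [hKdef]
    congr 1
    rw [hπ]
    field_simp
    ring
  -- algebraic identification of the ratio
  have hC : ∀ᶠ t in atTop, (∫ φ in (0:ℝ)..((Real.pi ^ 2 / 4) * t ^ 2),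
        Real.exp (-t * (φ + Real.pi / Real.sqrt φ))) /
      (Real.sqrt ((8 / (3 * t)) * (Real.pi/2) ^ ((5:ℝ)/3)) *
        Real.exp (-3 * (Real.pi/2) ^ ((2:ℝ)/3) * t)) = F t / K := by
    filter_upwards [eventually_ge_atTop (1:ℝ)] with t ht1
    have ht0 : 0 < t := lt_of_lt_of_le one_pos ht1
    have hst : 0 < Real.sqrt t := Real.sqrt_pos.mpr ht0
    have hLR : L t ≤ R t := by
      rw [hLdef, hRdef]; dsimp only
      apply mul_le_mul_of_nonneg_right _ hst.le
      have : 0 ≤ a^6*t^2 := by positivity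
      linarith
    have hFt : F t = Real.exp (3*a^2*t) * (Real.sqrt t *
        ∫ φ in (0:ℝ)..(a^6*t^2), Real.exp (-t * (φ + Real.pi/Real.sqrt φ))) := by
      rw [hFdef]; dsimp only
      rw [MeasureTheory.integral_indicator measurableSet_Ioc,
        ← intervalIntegral.integral_of_le hLR]
      have hfs : ∀ s, f t s = Real.exp (3*a^2*t) *
          (fun y => Real.exp (-t * ((a^2 + y) + Real.pi / Real.sqrt (a^2 + y)))) (s / Real.sqrt t) := by
        intro s; rw [hfdef]; dsimp only; rw [← Real.exp_add]; congr 1; ring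
      simp only [hfs]
      rw [intervalIntegral.integral_const_mul]
      congr 1
      rw [intervalIntegral.integral_comp_div
        (f := fun y => Real.exp (-t * ((a^2 + y) + Real.pi / Real.sqrt (a^2 + y)))) hst.ne']
      have hL' : L t / Real.sqrt t = -a^2 := by
        rw [hLdef]; dsimp only; exact mul_div_cancel_right₀ _ hst.ne'
      have hR' : R t / Real.sqrt t = a^6*t^2 - a^2 := by
        rw [hRdef]; dsimp only; exact mul_div_cancel_right₀ _ hst.ne'
      rw [hL', hR', smul_eq_mul]
      congr 1
      have := intervalIntegral.integral_comp_add_left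
        (a := -a^2) (b := a^6*t^2 - a^2)
        (fun φ => Real.exp (-t * (φ + Real.pi/Real.sqrt φ))) (a^2)
      rw [this]
      norm_num
    rw [hπ6, ha5, ha2, hFt]
    have hsq : Real.sqrt ((8/(3*t)) * a^5) = K / Real.sqrt t := by
      rw [show (8/(3*t))*a^5 = (8*a^5/3)/t by field_simp,
        Real.sqrt_div (by positivity) t, hKdef]
    rw [hsq]
    set I := ∫ φ in (0:ℝ)..(a^6*t^2), Real.exp (-t * (φ + Real.pi/Real.sqrt φ)) with hI
    have hE : Real.exp (-3*a^2*t) = (Real.exp (3*a^2*t))⁻¹ := by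
      rw [show -3*a^2*t = -(3*a^2*t) by ring, Real.exp_neg]
    rw [hE]
    have hEpos : 0 < Real.exp (3*a^2*t) := Real.exp_pos _
    field_simp
  have hlim : Tendsto (fun t => F t / K) atTop (𝓝 1) := by
    have := hDCT.div_const K
    rw [hgauss, div_self hK.ne'] at this
    exact this
  exact hlim.congr' (hC.mono fun t ht => ht.symm)

/-- Laplace-method asymptotics of the integral `∫₀^{(π²/4) j^{2/3}} e^{−j^{1/3}(φ+π/√φ)} dφ`. -/
theorem stmt14 :
    Filter.Tendsto (fun j : ℝ =>
      (∫ φ in (0:ℝ)..((Real.pi ^ 2 / 4) * j ^ ((2:ℝ)/3)),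
        Real.exp (-(j ^ ((1:ℝ)/3)) * (φ + Real.pi / Real.sqrt φ))) /
      (Real.sqrt ((8 / (3 * j ^ ((1:ℝ)/3))) * (Real.pi/2) ^ ((5:ℝ)/3)) *
        Real.exp (-3 * (Real.pi/2) ^ ((2:ℝ)/3) * j ^ ((1:ℝ)/3))))
      Filter.atTop (nhds 1) := by
  have h13 : Tendsto (fun j : ℝ => j ^ ((1:ℝ)/3)) atTop atTop :=
    tendsto_rpow_atTop (by norm_num)
  have h := aux_main.comp h13
  refine h.congr' ?_
  filter_upwards [eventually_gt_atTop (0:ℝ)] with j hj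
  have h2 : (j ^ ((1:ℝ)/3))^2 = j ^ ((2:ℝ)/3) := by
    rw [← Real.rpow_natCast (j ^ ((1:ℝ)/3)) 2, ← Real.rpow_mul hj.le]
    norm_num
  simp only [Function.comp_apply, h2]
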